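/- Let λ ∈ ℝ, A ≠ 0, and x₀, y₀, z₀ ∈ ℝ. Define, for t ∈ ℝ, y(t) = A t + y₀, x(t) = (λ/A)·(arsinh(A t + y₀) − arsinh(y₀)) + x₀, and z(t) = (λ/A)·(√((A t + y₀)² + 1) − √(y₀² + 1)) + z₀. Then for all t: x'(t) = λ/√(1 + y(t)²), y'(t) = A, and z'(t) = λ·y(t)/√(1 + y(t)²). That is, (x, y, z) is an integral curve of the projected vector field X_H^γ of the nonholonomic particle with the Hamilton–Jacobi solution γ = (λ/√(1+y²), A, λy/√(1+y²)). -/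

import Mathlib

/-- Explicit integral curves of the projected vector field `X_H^γ` of the nonholonomic
particle: with `y(t) = At + y₀`,
`x(t) = (λ/A)(arsinh(At + y₀) − arsinh y₀) + x₀` and
`z(t) = (λ/A)(√((At + y₀)² + 1) − √(y₀² + 1)) + z₀`, one has
`x' = λ/√(1 + y²)`, `y' = A`, and `z' = λ y/√(1 + y²)`. -/
theorem nonholonomic_particle_integral_curves
    (l A x₀ y₀ z₀ : ℝ) (hA : A ≠ 0)
    (x y z : ℝ → ℝ)
    (hy : ∀ t, y t = A * t + y₀)
    (hx : ∀ t, x t = (l / A) * (Real.arsinh (A * t + y₀) - Real.arsinh y₀) + x₀)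
    (hz : ∀ t, z t = (l / A) *
      (Real.sqrt ((A * t + y₀) ^ 2 + 1) - Real.sqrt (y₀ ^ 2 + 1)) + z₀) :
    ∀ t : ℝ,
      HasDerivAt x (l / Real.sqrt (1 + y t ^ 2)) t ∧
      HasDerivAt y A t ∧
      HasDerivAt z (l * y t / Real.sqrt (1 + y t ^ 2)) t := by
  intro t
  have hlin : HasDerivAt (fun t : ℝ => A * t + y₀) A t := by
    simpa using ((hasDerivAt_id t).const_mul A).add_const y₀
  have hyt : HasDerivAt y A t := by
    apply hlin.congr_of_eventuallyEq
    filter_upwards with s using (hy s)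
  have hs : Real.sqrt (1 + (A * t + y₀) ^ 2) ≠ 0 := by
    positivity
  refine ⟨?_, hyt, ?_⟩
  · have h1 : HasDerivAt (fun s => (l / A) *
        (Real.arsinh (A * s + y₀) - Real.arsinh y₀) + x₀)
        ((l / A) * ((Real.sqrt (1 + (A * t + y₀) ^ 2))⁻¹ * A)) t := by
      exact ((((Real.hasDerivAt_arsinh _).comp t hlin).sub_const _).const_mul _).add_const _
    have : HasDerivAt x ((l / A) * ((Real.sqrt (1 + (A * t + y₀) ^ 2))⁻¹ * A)) t := by
      apply h1.congr_of_eventuallyEq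
      filter_upwards with s using (hx s)
    convert this using 1
    rw [hy t]
    field_simp
  · have hsq : HasDerivAt (fun s => Real.sqrt ((A * s + y₀) ^ 2 + 1))
        ((2 * (A * t + y₀) * A) / (2 * Real.sqrt ((A * t + y₀) ^ 2 + 1))) t := by
      have hpoly : HasDerivAt (fun s : ℝ => (A * s + y₀) ^ 2 + 1)
          (2 * (A * t + y₀) * A) t := by
        simpa using ((hlin.pow 2).add_const 1)
      have hne : (A * t + y₀) ^ 2 + 1 ≠ 0 := by positivity
      exact hpoly.sqrt hne
    have h1 : HasDerivAt (fun s => (l / A) *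
        (Real.sqrt ((A * s + y₀) ^ 2 + 1) - Real.sqrt (y₀ ^ 2 + 1)) + z₀)
        ((l / A) * ((2 * (A * t + y₀) * A) / (2 * Real.sqrt ((A * t + y₀) ^ 2 + 1)))) t :=
      ((hsq.sub_const _).const_mul _).add_const _
    have h2 : HasDerivAt z
        ((l / A) * ((2 * (A * t + y₀) * A) / (2 * Real.sqrt ((A * t + y₀) ^ 2 + 1)))) t := by
      apply h1.congr_of_eventuallyEq
      filter_upwards with s using (hz s)
    convert h2 using 1
    rw [hy t]
    have : Real.sqrt ((A * t + y₀) ^ 2 + 1) = Real.sqrt (1 + (A * t + y₀) ^ 2) := by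
      ring_nf
    rw [this]
    field_simp
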